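/- For every integer p ≥ 2, the function f_p : [0,1] → ℝ defined by f_p(x) = 1 - x^p(1-x)/(1-x^p) for x ∈ [0,1) and f_p(1) = 1 - 1/p is Lipschitz with some constant strictly less than 1 (i.e., f_p is a contraction on [0,1]). -/

import Mathlib

open Finset

/-- The key numerator sum `N(x,y)` appearing in `xᵖS(y) - yᵖS(x) = (x-y)·N(x,y)`. -/
private noncomputable def auxN (p : ℕ) (x y : ℝ) : ℝ :=
  ∑ i ∈ range p, x ^ i * y ^ i * ∑ k ∈ range (p - i), x ^ k * y ^ (p - i - 1 - k)

private lemma auxN_key (p : ℕ) (x y : ℝ) :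
    x ^ p * (∑ i ∈ range p, y ^ i) - y ^ p * (∑ i ∈ range p, x ^ i)
      = (x - y) * auxN p x y := by
  unfold auxN
  rw [Finset.mul_sum, Finset.mul_sum, Finset.mul_sum, ← Finset.sum_sub_distrib]
  refine Finset.sum_congr rfl fun i hi => ?_
  have hip : i ≤ p := le_of_lt (Finset.mem_range.mp hi)
  have h1 : x ^ p = x ^ i * x ^ (p - i) := by rw [← pow_add, Nat.add_sub_cancel' hip]
  have h2 : y ^ p = y ^ i * y ^ (p - i) := by rw [← pow_add, Nat.add_sub_cancel' hip]
  have h3 := geom_sum₂_mul x y (p - i)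
  rw [h1, h2]
  linear_combination (-(x ^ i * y ^ i)) * h3

private lemma auxN_eq (p : ℕ) (x y : ℝ) (hp : 1 ≤ p) :
    auxN p x y
      = ∑ q ∈ ((range p ×ˢ range p).filter fun q => p - 1 ≤ q.1 + q.2),
          x ^ q.1 * y ^ q.2 := by
  unfold auxN
  simp_rw [Finset.mul_sum]
  rw [Finset.sum_sigma']
  refine Finset.sum_nbij' (fun q => (q.1 + q.2, p - 1 - q.2))
    (fun q => (⟨q.1 - (p - 1 - q.2), p - 1 - q.2⟩ : Σ _ : ℕ, ℕ)) ?_ ?_ ?_ ?_ ?_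
  · rintro ⟨i, k⟩ h
    simp only [Finset.mem_sigma, Finset.mem_range] at h
    simp only [Finset.mem_filter, Finset.mem_product, Finset.mem_range]
    omega
  · rintro ⟨a, b⟩ h
    simp only [Finset.mem_filter, Finset.mem_product, Finset.mem_range] at h
    simp only [Finset.mem_sigma, Finset.mem_range]
    omega
  · rintro ⟨i, k⟩ h
    simp only [Finset.mem_sigma, Finset.mem_range] at h
    have h1 : i + k - (p - 1 - (p - 1 - k)) = i := by omega
    have h2 : p - 1 - (p - 1 - k) = k := by omega
    simp [h1, h2]
  · rintro ⟨a, b⟩ h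
    simp only [Finset.mem_filter, Finset.mem_product, Finset.mem_range] at h
    have h1 : a - (p - 1 - b) + (p - 1 - b) = a := by omega
    have h2 : p - 1 - (p - 1 - b) = b := by omega
    simp [h1, h2]
  · rintro ⟨i, k⟩ h
    simp only [Finset.mem_sigma, Finset.mem_range] at h
    have h1 : i + (p - i - 1 - k) = p - 1 - k := by omega
    dsimp only
    rw [← h1, pow_add, pow_add]
    ring

theorem stmt_0 (p : ℕ) (hp : 2 ≤ p) :
    ∃ K : NNReal, (K : ℝ) < 1 ∧
      LipschitzOnWith K
        (fun x : ℝ => if x = 1 then 1 - 1 / (p : ℝ)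
          else 1 - x ^ p * (1 - x) / (1 - x ^ p))
        (Set.Icc (0 : ℝ) 1) := by
  have hp0 : (0 : ℝ) < p := by positivity
  have hp2 : (2 : ℝ) ≤ p := by exact_mod_cast hp
  have hp2pos : (0 : ℝ) < (p : ℝ) ^ 2 := by positivity
  have hK0 : (0 : ℝ) ≤ 1 - 1 / (p : ℝ) ^ 2 := by
    have : 1 / (p : ℝ) ^ 2 ≤ 1 := by
      rw [div_le_one hp2pos]; nlinarith
    linarith
  refine ⟨NNReal.mk (1 - 1 / (p : ℝ) ^ 2) hK0, ?_, ?_⟩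
  · simp only [NNReal.coe_mk]
    have : (0 : ℝ) < 1 / (p : ℝ) ^ 2 := by positivity
    linarith
  set S : ℝ → ℝ := fun x => ∑ i ∈ range p, x ^ i with hSdef
  have hS1 : ∀ x ∈ Set.Icc (0 : ℝ) 1, 1 ≤ S x := by
    intro x hx
    have h0 : (0 : ℕ) ∈ range p := by simp; omega
    have := Finset.single_le_sum (f := fun i => x ^ i)
      (fun i _ => pow_nonneg hx.1 i) h0
    simpa using this
  have hSp : ∀ x ∈ Set.Icc (0 : ℝ) 1, S x ≤ p := by
    intro x hx
    calc S x ≤ ∑ _i ∈ range p, (1 : ℝ) :=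
          Finset.sum_le_sum fun i _ => pow_le_one₀ hx.1 hx.2
      _ = p := by simp
  have hS0 : ∀ x ∈ Set.Icc (0 : ℝ) 1, 0 < S x := fun x hx => lt_of_lt_of_le one_pos (hS1 x hx)
  -- the function agrees with g x := 1 - x^p / S x on [0,1]
  have hfg : ∀ x ∈ Set.Icc (0 : ℝ) 1,
      (if x = 1 then 1 - 1 / (p : ℝ) else 1 - x ^ p * (1 - x) / (1 - x ^ p))
        = 1 - x ^ p / S x := by
    intro x hx
    by_cases h1 : x = 1
    · subst h1
      have : S 1 = p := by simp [hSdef]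
      simp [this]
    · rw [if_neg h1]
      have hxlt : x < 1 := lt_of_le_of_ne hx.2 h1
      have hne : (1 : ℝ) - x ≠ 0 := by linarith
      have hgeo : (1 : ℝ) - x ^ p = S x * (1 - x) := by
        have := geom_sum_mul x p
        simp only [hSdef]
        linarith [this]
      rw [hgeo, mul_comm (S x) (1 - x), ← mul_div_mul_right (x ^ p) (S x) hne]
      ring_nf
  rw [lipschitzOnWith_iff_dist_le_mul]
  intro x hx y hy
  rw [hfg x hx, hfg y hy]
  simp only [NNReal.coe_mk, Real.dist_eq]
  have hSx := hS0 x hx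
  have hSy := hS0 y hy
  have hnum : y ^ p * S x - x ^ p * S y = (y - x) * auxN p y x := auxN_key p y x
  have hsub : (1 - x ^ p / S x) - (1 - y ^ p / S y)
      = (y - x) * auxN p y x / (S x * S y) := by
    have h : (1 - x ^ p / S x) - (1 - y ^ p / S y)
        = (y ^ p * S x - x ^ p * S y) / (S x * S y) := by
      field_simp
      ring
    rw [h, hnum]
  rw [hsub]
  -- bounds on N
  have hNnn : 0 ≤ auxN p y x := by
    unfold auxN
    refine Finset.sum_nonneg fun i _ => mul_nonneg (mul_nonneg (pow_nonneg hy.1 i)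
      (pow_nonneg hx.1 i)) (Finset.sum_nonneg fun k _ => mul_nonneg (pow_nonneg hy.1 k)
      (pow_nonneg hx.1 _))
  have hNle : auxN p y x ≤ S y * S x - 1 := by
    rw [auxN_eq p y x (by omega)]
    have hprod : S y * S x = ∑ q ∈ range p ×ˢ range p, y ^ q.1 * x ^ q.2 := by
      simp only [hSdef]
      rw [Finset.sum_mul_sum, ← Finset.sum_product']
    have hmem : ((0 : ℕ), (0 : ℕ)) ∈ range p ×ˢ range p := by
      simp only [Finset.mem_product, Finset.mem_range]; omega
    have herase := Finset.sum_erase_add (range p ×ˢ range p)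
      (fun q => y ^ q.1 * x ^ q.2) hmem
    have hsubset : ((range p ×ˢ range p).filter fun q => p - 1 ≤ q.1 + q.2)
        ⊆ (range p ×ˢ range p).erase (0, 0) := by
      rintro ⟨a, b⟩ h
      simp only [Finset.mem_filter, Finset.mem_product, Finset.mem_range] at h
      simp only [Finset.mem_erase, Finset.mem_product, Finset.mem_range, Ne, Prod.mk.injEq]
      constructor
      · omega
      · exact ⟨h.1.1, h.1.2⟩
    calc ∑ q ∈ ((range p ×ˢ range p).filter fun q => p - 1 ≤ q.1 + q.2), y ^ q.1 * x ^ q.2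
        ≤ ∑ q ∈ (range p ×ˢ range p).erase (0, 0), y ^ q.1 * x ^ q.2 :=
          Finset.sum_le_sum_of_subset_of_nonneg hsubset
            (fun q _ _ => mul_nonneg (pow_nonneg hy.1 _) (pow_nonneg hx.1 _))
      _ = S y * S x - 1 := by
          rw [hprod]
          simp only [pow_zero, one_mul] at herase
          linarith
  have hNle' : auxN p y x ≤ S x * S y - 1 := by
    rw [mul_comm (S y) (S x)] at hNle; exact hNle
  have hSS : S x * S y ≤ (p : ℝ) ^ 2 := by
    calc S x * S y ≤ (p : ℝ) * (p : ℝ) :=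
        mul_le_mul (hSp x hx) (hSp y hy) (le_of_lt hSy) (le_of_lt hp0)
      _ = (p : ℝ) ^ 2 := by ring
  rw [abs_div, abs_mul, abs_of_pos (mul_pos hSx hSy), abs_of_nonneg hNnn,
    div_le_iff₀ (mul_pos hSx hSy)]
  have key : auxN p y x ≤ (1 - 1 / (p : ℝ) ^ 2) * (S x * S y) := by
    have h1 : S x * S y / (p : ℝ) ^ 2 ≤ 1 := (div_le_one hp2pos).mpr hSS
    have h2 : (1 - 1 / (p : ℝ) ^ 2) * (S x * S y)
        = S x * S y - S x * S y / (p : ℝ) ^ 2 := by ring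
    linarith
  calc |y - x| * auxN p y x ≤ |y - x| * ((1 - 1 / (p : ℝ) ^ 2) * (S x * S y)) :=
      mul_le_mul_of_nonneg_left key (abs_nonneg _)
    _ = (1 - 1 / (p : ℝ) ^ 2) * |x - y| * (S x * S y) := by rw [abs_sub_comm]; ring
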